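/- Let $\lambda + \mu > 1$, $f, h \in C^\lambda([a,b];\mathbb{R})$, $g \in C^\mu([a,b];\mathbb{R})$, and define $\varphi(y) = \int_a^y f(x)\,dg(x)$ for $y \in [a,b]$ (Young integral). Then $\varphi \in C^\mu([a,b];\mathbb{R})$ and $\int_a^b h(x)\,d\varphi(x) = \int_a^b h(x) f(x)\, dg(x)$. -/

import Mathlib

open Finset

/-- `I` is the (Young / Riemann–Stieltjes) integral `∫_a^b f dg`: left-point Riemann–Stieltjes
sums along partitions of `[a,b]` converge to `I` as the mesh tends to `0`. -/
def IsRSIntegral (f g : ℝ → ℝ) (a b I : ℝ) : Prop :=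
  ∀ ε > (0 : ℝ), ∃ δ > (0 : ℝ), ∀ (n : ℕ) (t : ℕ → ℝ),
    t 0 = a → t n = b → (∀ k < n, t k ≤ t (k + 1)) → (∀ k < n, t (k + 1) - t k < δ) →
    |(∑ k ∈ Finset.range n, f (t k) * (g (t (k + 1)) - g (t k))) - I| < ε

open Filter Topology

namespace YoungAux

/-- Riemann–Stieltjes left sum. -/
noncomputable def RS (F G : ℝ → ℝ) (t : ℕ → ℝ) (n : ℕ) : ℝ :=
  ∑ k ∈ Finset.range n, F (t k) * (G (t (k + 1)) - G (t k))

structure Part (s t : ℝ) (n : ℕ) (p : ℕ → ℝ) : Prop where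
  first : p 0 = s
  last : p n = t
  mono : ∀ k < n, p k ≤ p (k + 1)

lemma steps_mono {α : Type*} [Preorder α] (p : ℕ → α) (n : ℕ)
    (h : ∀ k < n, p k ≤ p (k + 1)) : ∀ j k, j ≤ k → k ≤ n → p j ≤ p k := by
  intro j k hjk hkn
  induction k with
  | zero => simp_all
  | succ m ih =>
    rcases Nat.eq_or_lt_of_le hjk with rfl | hlt
    · exact le_rfl
    · exact (ih (Nat.lt_succ_iff.mp hlt) (le_trans (Nat.le_succ m) hkn)).trans
        (h m (Nat.lt_of_succ_le hkn))

lemma Part.mono' {s t n p} (hp : Part s t n p) {j k : ℕ} (hjk : j ≤ k) (hkn : k ≤ n) :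
    p j ≤ p k := steps_mono p n hp.mono j k hjk hkn

lemma Part.mem {s t n p} (hp : Part s t n p) {k : ℕ} (hk : k ≤ n) : p k ∈ Set.Icc s t := by
  constructor
  · rw [← hp.first]; exact hp.mono' (Nat.zero_le k) hk
  · rw [← hp.last]; exact hp.mono' hk le_rfl

lemma Part.le {s t n p} (hp : Part s t n p) : s ≤ t := by
  have := hp.mem (Nat.zero_le n); rw [hp.first] at this; exact this.2

lemma Part.const {s n p} (hp : Part s s n p) {k : ℕ} (hk : k ≤ n) : p k = s :=
  le_antisymm ((hp.mem hk).2) ((hp.mem hk).1)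

lemma RS_const {F G : ℝ → ℝ} {s n p} (hp : Part s s n p) : RS F G p n = 0 := by
  unfold RS
  refine Finset.sum_eq_zero fun k hk => ?_
  rw [Finset.mem_range] at hk
  rw [hp.const hk.le, hp.const hk, sub_self, mul_zero]

/-- tail of zeta-sum -/
noncomputable def ZS (θ : ℝ) (n : ℕ) : ℝ := ∑ j ∈ Finset.range n, ((j : ℝ) + 1) ^ (-θ)

noncomputable def Z (θ : ℝ) : ℝ := ∑' j : ℕ, ((j : ℝ) + 1) ^ (-θ)

lemma Z_summable {θ : ℝ} (hθ : 1 < θ) : Summable (fun j : ℕ => ((j : ℝ) + 1) ^ (-θ)) := by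
  have h := (Real.summable_one_div_nat_rpow (p := θ)).mpr hθ
  have h2 := (summable_nat_add_iff (f := fun n : ℕ => 1 / (n : ℝ) ^ θ) 1).mpr h
  refine h2.congr fun j => ?_
  rw [Real.rpow_neg (by positivity), one_div]
  push_cast
  ring_nf

lemma ZS_le_Z {θ : ℝ} (hθ : 1 < θ) (n : ℕ) : ZS θ n ≤ Z θ :=
  Summable.sum_le_tsum (Finset.range n) (fun i _ => by positivity) (Z_summable hθ)

lemma Z_nonneg {θ : ℝ} (hθ : 1 < θ) : 0 ≤ Z θ := tsum_nonneg (fun i => by positivity)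

/-- telescoping double-gap sum -/
lemma gap_sum (p : ℕ → ℝ) (m : ℕ) :
    ∑ k ∈ Finset.range m, (p (k + 2) - p k) = p (m + 1) + p m - p 1 - p 0 := by
  induction m with
  | zero => simp
  | succ m ih => rw [Finset.sum_range_succ, ih]; ring

/-- there is a point with small double gap -/
lemma exists_small_gap {s t : ℝ} {n : ℕ} {p : ℕ → ℝ} (hp : Part s t n p) (hn : 2 ≤ n) :
    ∃ k, k + 2 ≤ n ∧ p (k + 2) - p k ≤ 2 * (t - s) / ((n : ℝ) - 1) := by
  by_contra hcon
  push_neg at hcon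
  have hlt : ∀ k ∈ Finset.range (n - 1), 2 * (t - s) / ((n : ℝ) - 1) < p (k + 2) - p k := by
    intro k hk
    rw [Finset.mem_range] at hk
    exact hcon k (by omega)
  have hsum := Finset.sum_lt_sum_of_nonempty (s := Finset.range (n - 1))
    (by simp; omega) hlt
  rw [Finset.sum_const, Finset.card_range, gap_sum, nsmul_eq_mul] at hsum
  have hcast : ((n - 1 : ℕ) : ℝ) = (n : ℝ) - 1 := by
    have : 1 ≤ n := by omega
    push_cast [this]; ring
  have hne : (n : ℝ) - 1 ≠ 0 := by
    have : (2 : ℝ) ≤ n := by exact_mod_cast hn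
    linarith
  rw [hcast, mul_div_assoc'] at hsum
  rw [mul_comm ((n:ℝ)-1), mul_div_assoc, div_self hne, mul_one] at hsum
  have h1 : n - 1 + 1 = n := by omega
  rw [h1] at hsum
  have e1 : p n = t := hp.last
  have e2 : p (n - 1) ≤ t := by rw [← hp.last]; exact hp.mono' (by omega) le_rfl
  have e3 : s ≤ p 1 := by rw [← hp.first]; exact hp.mono' (by omega) (by omega)
  have e4 : p 0 = s := hp.first
  linarith


lemma RS_remove (F G : ℝ → ℝ) (p : ℕ → ℝ) (n k : ℕ) (hk : k + 2 ≤ n) :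
    RS F G (fun j => if j ≤ k then p j else p (j + 1)) (n - 1) =
      RS F G p n - (F (p (k + 1)) - F (p k)) * (G (p (k + 2)) - G (p (k + 1))) := by
  set T : ℕ → ℝ := fun j => F (p j) * (G (p (j + 1)) - G (p j)) with hT
  set q : ℕ → ℝ := fun j => if j ≤ k then p j else p (j + 1) with hq
  set Tq : ℕ → ℝ := fun j => F (q j) * (G (q (j + 1)) - G (q j)) with hTq
  have dp : RS F G p n = (∑ j ∈ Finset.range k, T j) + T k + T (k + 1)
      + ∑ j ∈ Finset.Ico (k + 2) n, T j := by
    have h1 : RS F G p n = ∑ j ∈ Finset.range n, T j := rfl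
    rw [h1, Finset.range_eq_Ico, ← Finset.sum_Ico_consecutive _ (Nat.zero_le (k + 2)) hk,
      ← Finset.range_eq_Ico, Finset.sum_range_succ, Finset.sum_range_succ]
    try ring
  have dq : RS F G q (n - 1) = (∑ j ∈ Finset.range k, T j)
      + F (p k) * (G (p (k + 2)) - G (p k)) + ∑ j ∈ Finset.Ico (k + 2) n, T j := by
    have h1 : RS F G q (n - 1) = ∑ j ∈ Finset.range (n - 1), Tq j := rfl
    have hkn : k + 1 ≤ n - 1 := by omega
    rw [h1, Finset.range_eq_Ico, ← Finset.sum_Ico_consecutive _ (Nat.zero_le (k + 1)) hkn,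
      ← Finset.range_eq_Ico, Finset.sum_range_succ]
    have e1 : ∑ j ∈ Finset.range k, Tq j = ∑ j ∈ Finset.range k, T j := by
      refine Finset.sum_congr rfl fun j hj => ?_
      rw [Finset.mem_range] at hj
      simp only [hTq, hq, hT, if_pos (by omega : j ≤ k), if_pos (by omega : j + 1 ≤ k)]
    have e2 : Tq k = F (p k) * (G (p (k + 2)) - G (p k)) := by
      simp only [hTq, hq, if_pos (le_refl k), if_neg (by omega : ¬ k + 1 ≤ k)]
    have e3 : ∑ j ∈ Finset.Ico (k + 1) (n - 1), Tq j = ∑ j ∈ Finset.Ico (k + 2) n, T j := by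
      rw [Finset.sum_Ico_eq_sum_range, Finset.sum_Ico_eq_sum_range]
      have hlen : n - 1 - (k + 1) = n - (k + 2) := by omega
      rw [hlen]
      refine Finset.sum_congr rfl fun i _ => ?_
      simp only [hTq, hq, hT, if_neg (by omega : ¬ k + 1 + i ≤ k),
        if_neg (by omega : ¬ k + 1 + i + 1 ≤ k)]
      have : k + 1 + i + 1 + 1 = k + 2 + i + 1 := by omega
      rw [this]
      have : k + 1 + i + 1 = k + 2 + i := by omega
      rw [this]
    rw [e1, e2, e3]
    try ring
  rw [dp, dq]
  simp only [hT]
  ring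

section Holder
variable {lam mu CF CG a b : ℝ} {F G : ℝ → ℝ}

/-- Main discrete Young–Loève estimate, inductive form. -/
lemma lemA_core (hlam : 0 < lam) (hmu : 0 < mu) (hθ : 1 < lam + mu)
    (hCF : 0 ≤ CF) (hCG : 0 ≤ CG)
    (hF : ∀ s ∈ Set.Icc a b, ∀ t ∈ Set.Icc a b, |F t - F s| ≤ CF * |t - s| ^ lam)
    (hG : ∀ s ∈ Set.Icc a b, ∀ t ∈ Set.Icc a b, |G t - G s| ≤ CG * |t - s| ^ mu)
    {s t : ℝ} (hs : s ∈ Set.Icc a b) (ht : t ∈ Set.Icc a b) :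
    ∀ n, ∀ p : ℕ → ℝ, Part s t n p →
      |RS F G p n - F s * (G t - G s)| ≤
        CF * CG * 2 ^ (lam + mu) * (t - s) ^ (lam + mu) * ZS (lam + mu) (n - 1) := by
  intro n
  induction n using Nat.strong_induction_on with
  | _ n IH =>
  intro p hp
  have hsub : Set.Icc s t ⊆ Set.Icc a b := Set.Icc_subset_Icc hs.1 ht.2
  have hmem : ∀ k ≤ n, p k ∈ Set.Icc a b := fun k hk => hsub (hp.mem hk)
  have hts : 0 ≤ t - s := sub_nonneg.mpr hp.le
  match n, hp, IH with
  | 0, hp, _ => 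
    have hst : s = t := by rw [← hp.first, ← hp.last]
    simp [RS, ZS, hst]
  | 1, hp, _ =>
    have h1 : RS F G p 1 = F s * (G t - G s) := by
      rw [RS, Finset.sum_range_one, hp.first]
      have : p 1 = t := hp.last
      rw [this]
    simp [h1, ZS]
  | (n + 2), hp, IH =>
    set N := n + 2 with hN
    obtain ⟨k, hk2, hkgap⟩ := exists_small_gap hp (by omega)
    set q : ℕ → ℝ := fun j => if j ≤ k then p j else p (j + 1) with hqdef
    have hq : Part s t (N - 1) q := by
      constructor
      · simp only [hqdef, if_pos (Nat.zero_le k)]; exact hp.first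
      · simp only [hqdef, if_neg (by omega : ¬ N - 1 ≤ k)]
        have : N - 1 + 1 = N := by omega
        rw [this]; exact hp.last
      · intro j hj
        simp only [hqdef]
        by_cases h1 : j + 1 ≤ k
        · rw [if_pos (by omega), if_pos h1]; exact hp.mono j (by omega)
        · by_cases h2 : j ≤ k
          · rw [if_pos h2, if_neg h1]
            have : j = k := by omega
            subst this
            exact hp.mono' (by omega) (by omega)
          · rw [if_neg h2, if_neg h1]; exact hp.mono (j + 1) (by omega)
    have hrem := RS_remove F G p N k hk2
    rw [← hqdef] at hrem
    -- bound on the removed term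
    set D := p (k + 2) - p k with hD
    have hD0 : 0 ≤ D := sub_nonneg.mpr (hp.mono' (by omega) hk2)
    have h01 : |p (k+1) - p k| ≤ D := by
      rw [abs_of_nonneg (sub_nonneg.mpr (hp.mono' (by omega) (by omega)))]
      have := hp.mono' (by omega : k+1 ≤ k+2) hk2
      simp only [hD]; linarith
    have h12 : |p (k+2) - p (k+1)| ≤ D := by
      rw [abs_of_nonneg (sub_nonneg.mpr (hp.mono' (by omega) (by omega)))]
      have := hp.mono' (by omega : k ≤ k+1) (by omega : k+1 ≤ N)
      simp only [hD]; linarith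
    have hFb : |F (p (k+1)) - F (p k)| ≤ CF * D ^ lam := by
      refine (hF (p k) (hmem k (by omega)) (p (k+1)) (hmem (k+1) (by omega))).trans ?_
      exact mul_le_mul_of_nonneg_left
        (Real.rpow_le_rpow (abs_nonneg _) h01 hlam.le) hCF
    have hGb : |G (p (k+2)) - G (p (k+1))| ≤ CG * D ^ mu := by
      refine (hG (p (k+1)) (hmem (k+1) (by omega)) (p (k+2)) (hmem (k+2) hk2)).trans ?_
      exact mul_le_mul_of_nonneg_left
        (Real.rpow_le_rpow (abs_nonneg _) h12 hmu.le) hCG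
    have hE : |(F (p (k+1)) - F (p k)) * (G (p (k+2)) - G (p (k+1)))| ≤
        CF * CG * D ^ (lam + mu) := by
      rw [abs_mul, Real.rpow_add_of_nonneg hD0 hlam.le hmu.le]
      calc |F (p (k+1)) - F (p k)| * |G (p (k+2)) - G (p (k+1))|
          ≤ (CF * D ^ lam) * (CG * D ^ mu) :=
            mul_le_mul hFb hGb (abs_nonneg _) (by positivity)
        _ = CF * CG * (D ^ lam * D ^ mu) := by ring
    -- D ≤ c
    set c : ℝ := 2 * (t - s) / ((N : ℝ) - 1) with hc
    have hNR : (1 : ℝ) ≤ (N : ℝ) - 1 := by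
      have : (2 : ℝ) ≤ (N : ℝ) := by exact_mod_cast (by omega : 2 ≤ N)
      linarith
    have hc0 : 0 ≤ c := by positivity
    have hDc : D ^ (lam + mu) ≤ c ^ (lam + mu) :=
      Real.rpow_le_rpow hD0 hkgap (by linarith)
    have hcval : c ^ (lam + mu) =
        2 ^ (lam + mu) * (t - s) ^ (lam + mu) * ((N : ℝ) - 1) ^ (-(lam + mu)) := by
      rw [hc, Real.div_rpow (by positivity) (by linarith),
        Real.mul_rpow (by norm_num) hts, Real.rpow_neg (by linarith)]
      ring
    -- zeta sum recursion
    have hZS : ZS (lam + mu) (N - 1) = ZS (lam + mu) (N - 2) + ((N : ℝ) - 1) ^ (-(lam+mu)) := by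
      have h1 : N - 1 = (N - 2) + 1 := by omega
      rw [h1, ZS, Finset.sum_range_succ, ← ZS]
      have h2 : ((N - 2 : ℕ) : ℝ) + 1 = (N : ℝ) - 1 := by
        have h3 : ((N - 2 : ℕ) : ℝ) = (N : ℝ) - 2 := by
          push_cast [(by omega : 2 ≤ N)]; ring
        rw [h3]; ring
      rw [h2]
    have hIH := IH (N - 1) (by omega) q hq
    have hNN : N - 1 - 1 = N - 2 := by omega
    rw [hNN] at hIH
    -- combine
    have key : |RS F G p N - F s * (G t - G s)| ≤
        |RS F G q (N - 1) - F s * (G t - G s)|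
        + |(F (p (k+1)) - F (p k)) * (G (p (k+2)) - G (p (k+1)))| := by
      rw [hrem]
      have := abs_add_le (RS F G p N - (F (p (k+1)) - F (p k)) * (G (p (k+2)) - G (p (k+1)))
        - F s * (G t - G s)) ((F (p (k+1)) - F (p k)) * (G (p (k+2)) - G (p (k+1))))
      calc |RS F G p N - F s * (G t - G s)| = 
        |(RS F G p N - (F (p (k+1)) - F (p k)) * (G (p (k+2)) - G (p (k+1)))
          - F s * (G t - G s)) + (F (p (k+1)) - F (p k)) * (G (p (k+2)) - G (p (k+1)))| := by
            ring_nf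
        _ ≤ _ := this
    have hfin : CF * CG * D ^ (lam + mu) ≤
        CF * CG * 2 ^ (lam+mu) * (t - s) ^ (lam+mu) * ((N:ℝ) - 1) ^ (-(lam+mu)) := by
      calc CF * CG * D ^ (lam + mu) ≤ CF * CG * c ^ (lam + mu) := by
            exact mul_le_mul_of_nonneg_left hDc (by positivity)
        _ = _ := by rw [hcval]; ring
    rw [hZS]
    have := key.trans (add_le_add hIH (hE.trans hfin))
    calc |RS F G p N - F s * (G t - G s)| ≤ _ := this
      _ = CF * CG * 2 ^ (lam + mu) * (t - s) ^ (lam + mu) *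
          (ZS (lam + mu) (N - 2) + ((N:ℝ) - 1) ^ (-(lam + mu))) := by ring

/-- final form of the Young–Loève estimate -/
lemma lemA (hlam : 0 < lam) (hmu : 0 < mu) (hθ : 1 < lam + mu)
    (hCF : 0 ≤ CF) (hCG : 0 ≤ CG)
    (hF : ∀ s ∈ Set.Icc a b, ∀ t ∈ Set.Icc a b, |F t - F s| ≤ CF * |t - s| ^ lam)
    (hG : ∀ s ∈ Set.Icc a b, ∀ t ∈ Set.Icc a b, |G t - G s| ≤ CG * |t - s| ^ mu)
    {s t : ℝ} (hs : s ∈ Set.Icc a b) (ht : t ∈ Set.Icc a b)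
    {n : ℕ} {p : ℕ → ℝ} (hp : Part s t n p) :
    |RS F G p n - F s * (G t - G s)| ≤
      CF * CG * 2 ^ (lam + mu) * Z (lam + mu) * (t - s) ^ (lam + mu) := by
  refine (lemA_core hlam hmu hθ hCF hCG hF hG hs ht n p hp).trans ?_
  have hts : 0 ≤ t - s := sub_nonneg.mpr hp.le
  calc CF * CG * 2 ^ (lam + mu) * (t - s) ^ (lam + mu) * ZS (lam + mu) (n - 1)
      ≤ CF * CG * 2 ^ (lam + mu) * (t - s) ^ (lam + mu) * Z (lam + mu) := by
        exact mul_le_mul_of_nonneg_left (ZS_le_Z hθ (n - 1)) (by positivity)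
    _ = _ := by ring

lemma sum_blocks (x : ℕ → ℝ) (σ : ℕ → ℕ) (n : ℕ) (h0 : σ 0 = 0)
    (hmono : ∀ j < n, σ j ≤ σ (j + 1)) :
    ∑ k ∈ Finset.range (σ n), x k
      = ∑ j ∈ Finset.range n, ∑ k ∈ Finset.Ico (σ j) (σ (j + 1)), x k := by
  induction n with
  | zero => simp [h0]
  | succ m ih =>
    rw [Finset.sum_range_succ, ← ih (fun j hj => hmono j (by omega))]
    rw [Finset.range_eq_Ico, Finset.range_eq_Ico]
    exact (Finset.sum_Ico_consecutive x (by omega : 0 ≤ σ m) (hmono m (by omega))).symm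

/-- refinement estimate -/
lemma refine_est (hlam : 0 < lam) (hmu : 0 < mu) (hθ : 1 < lam + mu)
    (hCF : 0 ≤ CF) (hCG : 0 ≤ CG)
    (hF : ∀ s ∈ Set.Icc a b, ∀ t ∈ Set.Icc a b, |F t - F s| ≤ CF * |t - s| ^ lam)
    (hG : ∀ s ∈ Set.Icc a b, ∀ t ∈ Set.Icc a b, |G t - G s| ≤ CG * |t - s| ^ mu)
    {s t : ℝ} (hs : s ∈ Set.Icc a b) (ht : t ∈ Set.Icc a b)
    {n N : ℕ} {p r : ℕ → ℝ} {σ : ℕ → ℕ} (hp : Part s t n p) (hr : Part s t N r)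
    (hσ0 : σ 0 = 0) (hσn : σ n = N) (hσm : ∀ j < n, σ j ≤ σ (j + 1))
    (hmatch : ∀ j ≤ n, r (σ j) = p j) :
    |RS F G r N - RS F G p n| ≤ CF * CG * 2 ^ (lam + mu) * Z (lam + mu) *
      ∑ j ∈ Finset.range n, (p (j + 1) - p j) ^ (lam + mu) := by
  set K := CF * CG * 2 ^ (lam + mu) * Z (lam + mu) with hK
  have hσle : ∀ j ≤ n, σ j ≤ N := fun j hj => hσn ▸ steps_mono σ n hσm j n hj le_rfl
  have hsub : Set.Icc s t ⊆ Set.Icc a b := Set.Icc_subset_Icc hs.1 ht.2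
  have hsplit : RS F G r N = ∑ j ∈ Finset.range n,
      ∑ k ∈ Finset.Ico (σ j) (σ (j + 1)), F (r k) * (G (r (k + 1)) - G (r k)) := by
    rw [RS, ← hσn]
    exact sum_blocks _ σ n hσ0 hσm
  have hblock : ∀ j < n,
      (∑ k ∈ Finset.Ico (σ j) (σ (j + 1)), F (r k) * (G (r (k + 1)) - G (r k)))
        = RS F G (fun i => r (σ j + i)) (σ (j + 1) - σ j) := by
    intro j hj
    rw [Finset.sum_Ico_eq_sum_range, RS]
    refine Finset.sum_congr rfl fun i _ => ?_
    have : σ j + i + 1 = σ j + (i + 1) := by omega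
    rw [this]
  have hsubpart : ∀ j < n, Part (p j) (p (j + 1)) (σ (j + 1) - σ j) (fun i => r (σ j + i)) := by
    intro j hj
    constructor
    · simpa using hmatch j hj.le
    · have h1 : σ j + (σ (j + 1) - σ j) = σ (j + 1) := by
        have := hσm j hj; omega
      simp only [h1]
      exact hmatch (j + 1) hj
    · intro i hi
      have h2 : σ j + i < σ (j + 1) := by omega
      have h3 : σ j + i < N := lt_of_lt_of_le h2 (hσle (j + 1) hj)
      have := hr.mono (σ j + i) h3
      simpa [Nat.add_assoc] using this
  have hest : ∀ j < n,
      |RS F G (fun i => r (σ j + i)) (σ (j + 1) - σ j)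
        - F (p j) * (G (p (j + 1)) - G (p j))| ≤ K * (p (j + 1) - p j) ^ (lam + mu) := by
    intro j hj
    exact lemA hlam hmu hθ hCF hCG hF hG
      (hsub (hp.mem hj.le)) (hsub (hp.mem hj)) (hsubpart j hj)
  have hdiff : RS F G r N - RS F G p n = ∑ j ∈ Finset.range n,
      (RS F G (fun i => r (σ j + i)) (σ (j + 1) - σ j)
        - F (p j) * (G (p (j + 1)) - G (p j))) := by
    rw [hsplit, RS, ← Finset.sum_sub_distrib]
    refine Finset.sum_congr rfl fun j hj => ?_
    rw [Finset.mem_range] at hj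
    rw [hblock j hj]
  rw [hdiff]
  refine (Finset.abs_sum_le_sum_abs _ _).trans ?_
  rw [Finset.mul_sum]
  refine Finset.sum_le_sum fun j hj => ?_
  rw [Finset.mem_range] at hj
  exact hest j hj

lemma sum_gap_pow_le {θ : ℝ} (hθ1 : 1 < θ) {s t : ℝ} {n : ℕ} {p : ℕ → ℝ}
    (hp : Part s t n p) {δ : ℝ} (hδ : 0 ≤ δ) (hms : ∀ k < n, p (k + 1) - p k ≤ δ) :
    ∑ j ∈ Finset.range n, (p (j + 1) - p j) ^ θ ≤ δ ^ (θ - 1) * (t - s) := by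
  have key : ∀ j < n, (p (j + 1) - p j) ^ θ ≤ δ ^ (θ - 1) * (p (j + 1) - p j) := by
    intro j hj
    have h0 : 0 ≤ p (j + 1) - p j := sub_nonneg.mpr (hp.mono j hj)
    have e1 : (p (j + 1) - p j) ^ θ = (p (j + 1) - p j) ^ (θ - 1) * (p (j + 1) - p j) := by
      have h := Real.rpow_add_of_nonneg h0 (by linarith : (0:ℝ) ≤ θ - 1) zero_le_one
      rw [Real.rpow_one] at h
      nth_rewrite 1 [show θ = θ - 1 + 1 by ring]
      exact h
    rw [e1]
    exact mul_le_mul_of_nonneg_right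
      (Real.rpow_le_rpow h0 (hms j hj) (by linarith)) h0
  calc ∑ j ∈ Finset.range n, (p (j + 1) - p j) ^ θ
      ≤ ∑ j ∈ Finset.range n, δ ^ (θ - 1) * (p (j + 1) - p j) :=
        Finset.sum_le_sum fun j hj => key j (Finset.mem_range.mp hj)
    _ = δ ^ (θ - 1) * (t - s) := by
        rw [← Finset.mul_sum, Finset.sum_range_sub, hp.last, hp.first]

end Holder

/-- common refinement of two partitions -/
lemma exists_merge {s t : ℝ} {n m : ℕ} {p q : ℕ → ℝ} (hp : Part s t n p) (hq : Part s t m q) :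
    ∃ (N : ℕ) (r : ℕ → ℝ) (σ τ : ℕ → ℕ), Part s t N r ∧
      (σ 0 = 0 ∧ σ n = N ∧ (∀ j < n, σ j ≤ σ (j + 1)) ∧ ∀ j ≤ n, r (σ j) = p j) ∧
      (τ 0 = 0 ∧ τ m = N ∧ (∀ j < m, τ j ≤ τ (j + 1)) ∧ ∀ j ≤ m, r (τ j) = q j) := by
  classical
  set T : Finset ℝ := ((Finset.range (n + 1)).image p) ∪ ((Finset.range (m + 1)).image q)
    with hT
  have hpT : ∀ j ≤ n, p j ∈ T := fun j hj => Finset.mem_union_left _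
    (Finset.mem_image.mpr ⟨j, Finset.mem_range.mpr (by omega), rfl⟩)
  have hqT : ∀ j ≤ m, q j ∈ T := fun j hj => Finset.mem_union_right _
    (Finset.mem_image.mpr ⟨j, Finset.mem_range.mpr (by omega), rfl⟩)
  have hsT : s ∈ T := hp.first ▸ hpT 0 (Nat.zero_le n)
  have htT : t ∈ T := hp.last ▸ hpT n le_rfl
  have hmemT : ∀ x ∈ T, x ∈ Set.Icc s t := by
    intro x hx
    rw [hT, Finset.mem_union] at hx
    rcases hx with hx | hx <;> rw [Finset.mem_image] at hx <;>
      obtain ⟨j, hj, rfl⟩ := hx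
    · exact hp.mem (Nat.lt_succ_iff.mp (Finset.mem_range.mp hj))
    · exact hq.mem (Nat.lt_succ_iff.mp (Finset.mem_range.mp hj))
  have hne : T.Nonempty := ⟨s, hsT⟩
  have hc1 : 1 ≤ T.card := Finset.card_pos.mpr hne
  set N : ℕ := T.card - 1 with hN
  have hcard : T.card = N + 1 := by omega
  set e := T.orderIsoOfFin hcard with he
  set r : ℕ → ℝ := fun k => if h : k < N + 1 then (e ⟨k, h⟩ : ℝ) else t with hr
  have hrval : ∀ (k : ℕ) (h : k < N + 1), r k = (e ⟨k, h⟩ : ℝ) := by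
    intro k h; rw [hr]; simp [h]
  have hrmemT : ∀ k < N + 1, r k ∈ T := by
    intro k h; rw [hrval k h]; exact (e ⟨k, h⟩).2
  have hrmono : ∀ j k, j ≤ k → k < N + 1 → r j ≤ r k := by
    intro j k hjk hk
    rw [hrval j (by omega), hrval k hk]
    exact Subtype.coe_le_coe.mpr (e.monotone (by simpa [Fin.le_def] using hjk))
  have hidx : ∀ (x : ℝ) (hx : x ∈ T), r ((e.symm ⟨x, hx⟩ : Fin (N + 1)) : ℕ) = x := by
    intro x hx
    rw [hrval _ (e.symm ⟨x, hx⟩).isLt]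
    simp
  have hr0 : r 0 = s := by
    refine le_antisymm ?_ ((hmemT _ (hrmemT 0 (by omega))).1)
    have := hrmono 0 ((e.symm ⟨s, hsT⟩ : Fin (N + 1)) : ℕ) (Nat.zero_le _)
      (e.symm ⟨s, hsT⟩).isLt
    rw [hidx s hsT] at this
    exact this
  have hrN : r N = t := by
    refine le_antisymm ((hmemT _ (hrmemT N (by omega))).2) ?_
    have := hrmono ((e.symm ⟨t, htT⟩ : Fin (N + 1)) : ℕ) N
      (Nat.lt_succ_iff.mp (e.symm ⟨t, htT⟩).isLt) (by omega)
    rw [hidx t htT] at this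
    exact this
  have hPart : Part s t N r := ⟨hr0, hrN, fun k hk => hrmono k (k + 1) (by omega) (by omega)⟩
  -- index maps
  have key : ∀ (l : ℕ) (w : ℕ → ℝ), Part s t l w → (∀ j ≤ l, w j ∈ T) →
      ∃ σ : ℕ → ℕ, σ 0 = 0 ∧ σ l = N ∧ (∀ j < l, σ j ≤ σ (j + 1)) ∧
        ∀ j ≤ l, r (σ j) = w j := by
    intro l w hw hwT
    set σ : ℕ → ℕ := fun j => if h : j ≤ l then ((e.symm ⟨w j, hwT j h⟩ : Fin (N + 1)) : ℕ)
      else N with hσ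
    have hσval : ∀ (j : ℕ) (h : j ≤ l),
        σ j = ((e.symm ⟨w j, hwT j h⟩ : Fin (N + 1)) : ℕ) := by
      intro j h; rw [hσ]; simp [h]
    have hmatch : ∀ j ≤ l, r (σ j) = w j := by
      intro j hj; rw [hσval j hj]; exact hidx _ _
    have hinj : ∀ (k : ℕ) (hk : k < N + 1) (x : ℝ) (hx : x ∈ T), r k = x →
        ((e.symm ⟨x, hx⟩ : Fin (N + 1)) : ℕ) = k := by
      intro k hk x hx hrk
      rw [hrval k hk] at hrk
      have : e ⟨k, hk⟩ = ⟨x, hx⟩ := Subtype.ext hrk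
      rw [← this, e.symm_apply_apply]
    refine ⟨σ, ?_, ?_, ?_, hmatch⟩
    · rw [hσval 0 (Nat.zero_le l)]
      have h0 : w 0 = s := hw.first
      exact hinj 0 (by omega) (w 0) (hwT 0 (Nat.zero_le l)) (h0 ▸ hr0)
    · rw [hσval l le_rfl]
      have h0 : w l = t := hw.last
      exact hinj N (by omega) (w l) (hwT l le_rfl) (h0 ▸ hrN)
    · intro j hj
      rw [hσval j hj.le, hσval (j + 1) hj]
      have hle : w j ≤ w (j + 1) := hw.mono j hj
      have : (⟨w j, hwT j hj.le⟩ : {x // x ∈ T}) ≤ ⟨w (j + 1), hwT (j + 1) hj⟩ :=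
        Subtype.mk_le_mk.mpr hle
      simpa [Fin.le_def] using e.symm.monotone this
  obtain ⟨σ, hσ⟩ := key n p hp hpT
  obtain ⟨τ, hτ⟩ := key m q hq hqT
  exact ⟨N, r, σ, τ, hPart, hσ, hτ⟩

section Holder2
variable {lam mu CF CG a b : ℝ} {F G : ℝ → ℝ}

/-- any two fine partitions have close Riemann sums -/
lemma twoPart (hlam : 0 < lam) (hmu : 0 < mu) (hθ : 1 < lam + mu)
    (hCF : 0 ≤ CF) (hCG : 0 ≤ CG)
    (hF : ∀ s ∈ Set.Icc a b, ∀ t ∈ Set.Icc a b, |F t - F s| ≤ CF * |t - s| ^ lam)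
    (hG : ∀ s ∈ Set.Icc a b, ∀ t ∈ Set.Icc a b, |G t - G s| ≤ CG * |t - s| ^ mu)
    {s t : ℝ} (hs : s ∈ Set.Icc a b) (ht : t ∈ Set.Icc a b)
    {n m : ℕ} {p q : ℕ → ℝ} (hp : Part s t n p) (hq : Part s t m q)
    {δ₁ δ₂ : ℝ} (hδ₁ : 0 ≤ δ₁) (hδ₂ : 0 ≤ δ₂)
    (hm₁ : ∀ k < n, p (k + 1) - p k ≤ δ₁) (hm₂ : ∀ k < m, q (k + 1) - q k ≤ δ₂) :
    |RS F G p n - RS F G q m| ≤ CF * CG * 2 ^ (lam + mu) * Z (lam + mu) *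
      (δ₁ ^ (lam + mu - 1) + δ₂ ^ (lam + mu - 1)) * (t - s) := by
  obtain ⟨N, r, σ, τ, hr, ⟨hσ0, hσn, hσm, hσmatch⟩, ⟨hτ0, hτm, hτmo, hτmatch⟩⟩ :=
    exists_merge hp hq
  set K := CF * CG * 2 ^ (lam + mu) * Z (lam + mu) with hK
  have hK0 : 0 ≤ K := by
    have := Z_nonneg hθ
    positivity
  have h1 := refine_est hlam hmu hθ hCF hCG hF hG hs ht hp hr hσ0 hσn hσm hσmatch
  have h2 := refine_est hlam hmu hθ hCF hCG hF hG hs ht hq hr hτ0 hτm hτmo hτmatch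
  have g1 := sum_gap_pow_le hθ hp hδ₁ hm₁
  have g2 := sum_gap_pow_le hθ hq hδ₂ hm₂
  have hts : 0 ≤ t - s := sub_nonneg.mpr hp.le
  calc |RS F G p n - RS F G q m|
      ≤ |RS F G r N - RS F G p n| + |RS F G r N - RS F G q m| := by
        rw [abs_sub_comm (RS F G r N) (RS F G p n)]
        exact (abs_sub_le _ _ _).trans (by rw [abs_sub_comm])
    _ ≤ K * (δ₁ ^ (lam + mu - 1) * (t - s)) + K * (δ₂ ^ (lam + mu - 1) * (t - s)) := by
        exact add_le_add (h1.trans (mul_le_mul_of_nonneg_left g1 hK0))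
          (h2.trans (mul_le_mul_of_nonneg_left g2 hK0))
    _ = K * (δ₁ ^ (lam + mu - 1) + δ₂ ^ (lam + mu - 1)) * (t - s) := by ring

end Holder2

/-- fine partitions exist -/
lemma exists_fine {s t : ℝ} (hst : s ≤ t) {δ : ℝ} (hδ : 0 < δ) :
    ∃ (n : ℕ) (p : ℕ → ℝ), Part s t n p ∧ ∀ k < n, p (k + 1) - p k < δ := by
  rcases eq_or_lt_of_le hst with rfl | hlt
  · exact ⟨0, fun _ => s, ⟨rfl, rfl, by omega⟩, by omega⟩
  · obtain ⟨n, hn⟩ := exists_nat_gt ((t - s) / δ)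
    have hn0 : 0 < n := by
      by_contra h
      have : n = 0 := by omega
      subst this
      simp at hn
      have : 0 < (t - s) / δ := div_pos (by linarith) hδ
      linarith
    have hnR : 0 < (n : ℝ) := by exact_mod_cast hn0
    set p : ℕ → ℝ := fun k => s + k * ((t - s) / n) with hpdef
    have hgap : ∀ k : ℕ, p (k + 1) - p k = (t - s) / n := by
      intro k; rw [hpdef]; push_cast; ring
    have hgap_lt : (t - s) / n < δ := by
      rw [div_lt_iff₀ hnR]
      have h3 : t - s < n * δ := (div_lt_iff₀ hδ).mp hn
      linarith
    have hp0 : p 0 = s := by rw [hpdef]; simp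
    have hpn : p n = t := by rw [hpdef]; field_simp; ring
    clear_value p
    refine ⟨n, p, ⟨hp0, hpn, ?_⟩, ?_⟩
    · intro k hk
      have := hgap k
      have h2 : 0 ≤ (t - s) / n := div_nonneg (by linarith) hnR.le
      linarith
    · intro k hk; rw [hgap k]; exact hgap_lt

/-- concatenation of partitions -/
lemma exists_concat (F G : ℝ → ℝ) {u s t : ℝ} {n m : ℕ} {p q : ℕ → ℝ}
    (hp : Part u s n p) (hq : Part s t m q) :
    ∃ w : ℕ → ℝ, Part u t (n + m) w ∧
      (∀ k < n + m, w (k + 1) - w k = (if k < n then p (k + 1) - p k else q (k - n + 1) - q (k - n))) ∧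
      RS F G w (n + m) = RS F G p n + RS F G q m := by
  set w : ℕ → ℝ := fun k => if k < n then p k else q (k - n) with hw
  have hwge : ∀ k, n ≤ k → w k = q (k - n) := by
    intro k hk; rw [hw]; simp [Nat.not_lt.mpr hk]
  have hwle : ∀ k ≤ n, w k = p k := by
    intro k hk
    rcases Nat.lt_or_ge k n with h | h
    · rw [hw]; simp [h]
    · have hkn : k = n := by omega
      rw [hkn, hwge n le_rfl]
      simp [hq.first, hp.last]
  have hgap : ∀ k < n + m, w (k + 1) - w k =
      (if k < n then p (k + 1) - p k else q (k - n + 1) - q (k - n)) := by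
    intro k hk
    by_cases h : k < n
    · rw [if_pos h, hwle k h.le, hwle (k + 1) h]
    · rw [if_neg h, hwge k (by omega), hwge (k + 1) (by omega)]
      have : k + 1 - n = k - n + 1 := by omega
      rw [this]
  have hPart : Part u t (n + m) w := by
    constructor
    · rw [hwle 0 (Nat.zero_le n)]; exact hp.first
    · rw [hwge (n + m) (by omega)]
      have : n + m - n = m := by omega
      rw [this]; exact hq.last
    · intro k hk
      have := hgap k hk
      by_cases h : k < n
      · rw [if_pos h] at this
        have h2 := hp.mono k h
        linarith
      · rw [if_neg h] at this
        have h2 := hq.mono (k - n) (by omega)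
        linarith
  refine ⟨w, hPart, hgap, ?_⟩
  rw [RS, Finset.range_eq_Ico, ← Finset.sum_Ico_consecutive _ (Nat.zero_le n) (by omega : n ≤ n + m),
    ← Finset.range_eq_Ico]
  have e1 : ∑ k ∈ Finset.range n, F (w k) * (G (w (k + 1)) - G (w k)) = RS F G p n := by
    refine Finset.sum_congr rfl fun k hk => ?_
    rw [Finset.mem_range] at hk
    rw [hwle k hk.le, hwle (k + 1) hk]
  have e2 : ∑ k ∈ Finset.Ico n (n + m), F (w k) * (G (w (k + 1)) - G (w k)) = RS F G q m := by
    rw [Finset.sum_Ico_eq_sum_range]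
    have : n + m - n = m := by omega
    rw [this, RS]
    refine Finset.sum_congr rfl fun i _ => ?_
    rw [hwge (n + i) (by omega), hwge (n + i + 1) (by omega)]
    have e3 : n + i - n = i := by omega
    have e4 : n + i + 1 - n = i + 1 := by omega
    rw [e3, e4]
  rw [e1, e2]

lemma isRS_def {F G : ℝ → ℝ} {s t I : ℝ} : IsRSIntegral F G s t I ↔
    ∀ ε > (0 : ℝ), ∃ δ > (0 : ℝ), ∀ (n : ℕ) (p : ℕ → ℝ), Part s t n p →
      (∀ k < n, p (k + 1) - p k < δ) → |RS F G p n - I| < ε := by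
  constructor
  · intro hh ε hε
    obtain ⟨δ, hδ, h⟩ := hh ε hε
    exact ⟨δ, hδ, fun n p hp hm => h n p hp.first hp.last hp.mono hm⟩
  · intro hh ε hε
    obtain ⟨δ, hδ, h⟩ := hh ε hε
    exact ⟨δ, hδ, fun n p h1 h2 h3 hm => h n p ⟨h1, h2, h3⟩ hm⟩

lemma eq_of_abs_forall {x y : ℝ} (h : ∀ ε > (0:ℝ), |x - y| < ε) : x = y := by
  by_contra hne
  exact absurd (h _ (abs_pos.mpr (sub_ne_zero.mpr hne))) (lt_irrefl _)

lemma tendsto_mesh {c : ℝ} (hc : 0 ≤ c) {e : ℝ} (he : 0 < e) :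
    Tendsto (fun N : ℕ => (c / ((N : ℝ) + 1)) ^ e) atTop (𝓝 0) := by
  have h1 : Tendsto (fun N : ℕ => ((N : ℝ) + 1)) atTop atTop :=
    tendsto_atTop_add_const_right _ 1 tendsto_natCast_atTop_atTop
  have h2 : Tendsto (fun N : ℕ => ((N : ℝ) + 1) ^ e) atTop atTop :=
    (tendsto_rpow_atTop he).comp h1
  have h3 : Tendsto (fun N : ℕ => (((N : ℝ) + 1) ^ e)⁻¹) atTop (𝓝 0) :=
    h2.inv_tendsto_atTop
  have h4 : (fun N : ℕ => (c / ((N : ℝ) + 1)) ^ e)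
      = fun N : ℕ => c ^ e * (((N : ℝ) + 1) ^ e)⁻¹ := by
    funext N
    rw [Real.div_rpow hc (by positivity), div_eq_mul_inv]
  rw [h4]
  have := h3.const_mul (c ^ e)
  simpa using this

section Holder3
variable {lam mu CF CG a b : ℝ} {F G : ℝ → ℝ}

theorem exists_isRS (hlam : 0 < lam) (hmu : 0 < mu) (hθ : 1 < lam + mu)
    (hCF : 0 ≤ CF) (hCG : 0 ≤ CG)
    (hF : ∀ s ∈ Set.Icc a b, ∀ t ∈ Set.Icc a b, |F t - F s| ≤ CF * |t - s| ^ lam)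
    (hG : ∀ s ∈ Set.Icc a b, ∀ t ∈ Set.Icc a b, |G t - G s| ≤ CG * |t - s| ^ mu)
    {s t : ℝ} (hs : s ∈ Set.Icc a b) (ht : t ∈ Set.Icc a b) (hst : s ≤ t) :
    ∃ I : ℝ, IsRSIntegral F G s t I := by
  rcases eq_or_lt_of_le hst with rfl | hlt
  · refine ⟨0, isRS_def.mpr fun ε hε => ⟨1, one_pos, fun n p hp _ => ?_⟩⟩
    rw [RS_const hp, sub_zero, abs_zero]
    exact hε
  · set K := CF * CG * 2 ^ (lam + mu) * Z (lam + mu) with hK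
    have hZ0 := Z_nonneg hθ
    have hK0 : 0 ≤ K := by positivity
    have hts : (0:ℝ) < t - s := by linarith
    have hdel : ∀ N : ℕ, (0:ℝ) < (t - s) / ((N : ℝ) + 1) := by
      intro N; positivity
    have H : ∀ N : ℕ, ∃ (n : ℕ) (p : ℕ → ℝ), Part s t n p ∧
        ∀ k < n, p (k + 1) - p k < (t - s) / ((N : ℝ) + 1) :=
      fun N => exists_fine hst (hdel N)
    choose nn pp hPart hmesh using H
    set d : ℕ → ℝ := fun N => ((t - s) / ((N : ℝ) + 1)) ^ (lam + mu - 1) with hd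
    have hd0 : ∀ N, 0 ≤ d N := fun N => Real.rpow_nonneg (hdel N).le _
    set A : ℕ → ℝ := fun N => K * (t - s) * d N with hA
    have hA0 : ∀ N, 0 ≤ A N := fun N => by
      have := hd0 N; positivity
    set S : ℕ → ℝ := fun N => RS F G (pp N) (nn N) with hS
    have hSd : ∀ N M : ℕ, |S N - S M| ≤ A N + A M := by
      intro N M
      have h := twoPart hlam hmu hθ hCF hCG hF hG hs ht (hPart N) (hPart M)
        (hdel N).le (hdel M).le (fun k hk => (hmesh N k hk).le)
        (fun k hk => (hmesh M k hk).le)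
      calc |S N - S M| ≤ K * (d N + d M) * (t - s) := h
        _ = A N + A M := by rw [hA, hd]; ring
    have hdmono : ∀ L N : ℕ, L ≤ N → d N ≤ d L := by
      intro L N hLN
      refine Real.rpow_le_rpow (hdel N).le ?_ (by linarith)
      have h1 : ((L : ℝ) + 1) ≤ ((N : ℝ) + 1) := by
        have : (L:ℝ) ≤ N := by exact_mod_cast hLN
        linarith
      exact div_le_div_of_nonneg_left hts.le (by positivity) h1
    have hAtend : Tendsto A atTop (𝓝 0) := by
      have := (tendsto_mesh hts.le (by linarith : (0:ℝ) < lam + mu - 1)).const_mul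
        (K * (t - s))
      simpa [hA, hd] using this
    have hcauchy : CauchySeq S := by
      refine cauchySeq_of_le_tendsto_0 (fun L => 2 * A L) (fun N M L hN hM => ?_) ?_
      · rw [Real.dist_eq]
        refine (hSd N M).trans ?_
        have h1 : A N ≤ A L := by
          rw [hA]
          exact mul_le_mul_of_nonneg_left (hdmono L N hN) (by positivity)
        have h2 : A M ≤ A L := by
          rw [hA]
          exact mul_le_mul_of_nonneg_left (hdmono L M hM) (by positivity)
        show A N + A M ≤ 2 * A L
        linarith
      · have := hAtend.const_mul (2:ℝ)
        simpa using this
    obtain ⟨I, hI⟩ := cauchySeq_tendsto_of_complete hcauchy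
    have hSI : ∀ N, |S N - I| ≤ A N := by
      intro N
      have hf1 : Tendsto (fun M => |S N - S M|) atTop (𝓝 |S N - I|) :=
        ((tendsto_const_nhds.sub hI).abs)
      have hf2 : Tendsto (fun M => A N + A M) atTop (𝓝 (A N + 0)) :=
        tendsto_const_nhds.add hAtend
      have := le_of_tendsto_of_tendsto' hf1 hf2 (fun M => hSd N M)
      simpa using this
    refine ⟨I, isRS_def.mpr fun ε hε => ?_⟩
    obtain ⟨N₀, hN₀⟩ := (hAtend.eventually (gt_mem_nhds (show 0 < ε/4 by linarith))).exists
    refine ⟨(t - s) / ((N₀ : ℝ) + 1), hdel N₀, fun n p hp hm => ?_⟩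
    have h1 := twoPart hlam hmu hθ hCF hCG hF hG hs ht hp (hPart N₀)
      (hdel N₀).le (hdel N₀).le (fun k hk => (hm k hk).le)
      (fun k hk => (hmesh N₀ k hk).le)
    have h2 : K * (d N₀ + d N₀) * (t - s) = A N₀ + A N₀ := by rw [hA, hd]; ring
    rw [h2] at h1
    have h3 := hSI N₀
    calc |RS F G p n - I| ≤ |RS F G p n - S N₀| + |S N₀ - I| := abs_sub_le _ _ _
      _ ≤ (A N₀ + A N₀) + A N₀ := add_le_add h1 h3
      _ < ε := by linarith

theorem intBound (hlam : 0 < lam) (hmu : 0 < mu) (hθ : 1 < lam + mu)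
    (hCF : 0 ≤ CF) (hCG : 0 ≤ CG)
    (hF : ∀ s ∈ Set.Icc a b, ∀ t ∈ Set.Icc a b, |F t - F s| ≤ CF * |t - s| ^ lam)
    (hG : ∀ s ∈ Set.Icc a b, ∀ t ∈ Set.Icc a b, |G t - G s| ≤ CG * |t - s| ^ mu)
    {s t : ℝ} (hs : s ∈ Set.Icc a b) (ht : t ∈ Set.Icc a b) (hst : s ≤ t)
    {I : ℝ} (hI : IsRSIntegral F G s t I) :
    |I - F s * (G t - G s)| ≤
      CF * CG * 2 ^ (lam + mu) * Z (lam + mu) * (t - s) ^ (lam + mu) := by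
  refine le_of_forall_pos_le_add fun ε hε => ?_
  obtain ⟨δ, hδ, h⟩ := isRS_def.mp hI ε hε
  obtain ⟨n, p, hp, hm⟩ := exists_fine hst hδ
  have h1 := h n p hp hm
  have h2 := lemA hlam hmu hθ hCF hCG hF hG hs ht hp
  calc |I - F s * (G t - G s)|
      ≤ |I - RS F G p n| + |RS F G p n - F s * (G t - G s)| := abs_sub_le _ _ _
    _ ≤ ε + CF * CG * 2 ^ (lam + mu) * Z (lam + mu) * (t - s) ^ (lam + mu) := by
        rw [abs_sub_comm] at h1
        exact add_le_add h1.le h2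
    _ = _ := by ring

end Holder3

theorem isRS_unique {F G : ℝ → ℝ} {s t I J : ℝ} (hst : s ≤ t)
    (hI : IsRSIntegral F G s t I) (hJ : IsRSIntegral F G s t J) : I = J := by
  refine eq_of_abs_forall fun ε hε => ?_
  obtain ⟨δ₁, hδ₁, h1⟩ := isRS_def.mp hI (ε/2) (by linarith)
  obtain ⟨δ₂, hδ₂, h2⟩ := isRS_def.mp hJ (ε/2) (by linarith)
  obtain ⟨n, p, hp, hm⟩ := exists_fine hst (lt_min hδ₁ hδ₂)
  have g1 := h1 n p hp (fun k hk => (hm k hk).trans_le (min_le_left _ _))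
  have g2 := h2 n p hp (fun k hk => (hm k hk).trans_le (min_le_right _ _))
  calc |I - J| ≤ |I - RS F G p n| + |RS F G p n - J| := abs_sub_le _ _ _
    _ < ε := by rw [abs_sub_comm I _]; linarith

theorem isRS_add {F G : ℝ → ℝ} {u s t A B C : ℝ} (hus : u ≤ s) (hst : s ≤ t)
    (hA : IsRSIntegral F G u s A) (hB : IsRSIntegral F G s t B)
    (hC : IsRSIntegral F G u t C) : C = A + B := by
  refine eq_of_abs_forall fun ε hε => ?_
  obtain ⟨δ₁, hδ₁, h1⟩ := isRS_def.mp hA (ε/3) (by linarith)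
  obtain ⟨δ₂, hδ₂, h2⟩ := isRS_def.mp hB (ε/3) (by linarith)
  obtain ⟨δ₃, hδ₃, h3⟩ := isRS_def.mp hC (ε/3) (by linarith)
  set δ : ℝ := min δ₁ (min δ₂ δ₃) with hδdef
  have hδ : 0 < δ := lt_min hδ₁ (lt_min hδ₂ hδ₃)
  obtain ⟨n, p, hp, hmp⟩ := exists_fine hus hδ
  obtain ⟨m, q, hq, hmq⟩ := exists_fine hst hδ
  obtain ⟨w, hw, hwgap, hwRS⟩ := exists_concat F G hp hq
  have hwm : ∀ k < n + m, w (k + 1) - w k < δ₃ := by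
    intro k hk
    rw [hwgap k hk]
    split
    · exact (hmp k (by assumption)).trans_le ((min_le_right _ _).trans (min_le_right _ _) |>.trans le_rfl) |>.trans_le le_rfl
    · exact (hmq (k - n) (by omega)).trans_le ((min_le_right _ _).trans (min_le_right _ _))
  have g1 := h1 n p hp (fun k hk => (hmp k hk).trans_le (min_le_left _ _))
  have g2 := h2 m q hq (fun k hk => (hmq k hk).trans_le ((min_le_right _ _).trans (min_le_left _ _)))
  have g3 := h3 (n + m) w hw hwm
  rw [hwRS] at g3
  calc |C - (A + B)| ≤ |C - (RS F G p n + RS F G q m)|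
        + |(RS F G p n + RS F G q m) - (A + B)| := abs_sub_le _ _ _
    _ ≤ |C - (RS F G p n + RS F G q m)| + (|RS F G p n - A| + |RS F G q m - B|) := by
        have := abs_add_le (RS F G p n - A) (RS F G q m - B)
        have e : (RS F G p n + RS F G q m) - (A + B)
            = (RS F G p n - A) + (RS F G q m - B) := by ring
        rw [e]
        linarith
    _ < ε := by rw [abs_sub_comm C _]; linarith

end YoungAux

open YoungAux

/-- **Density formula for Young integrals:** if `f, h ∈ C^λ`, `g ∈ C^μ`, `λ + μ > 1`, and
`φ(y) = ∫_a^y f dg`, then `φ ∈ C^μ([a,b])` and `∫_a^b h dφ = ∫_a^b h f dg`. -/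
theorem stmt10 (lam mu : ℝ) (hlam : lam ∈ Set.Ioc (0 : ℝ) 1) (hmu : mu ∈ Set.Ioc (0 : ℝ) 1)
    (hsum : 1 < lam + mu) (a b : ℝ) (hab : a ≤ b)
    (f h g φ : ℝ → ℝ) (Cf Ch Cg : ℝ)
    (hf : ∀ s ∈ Set.Icc a b, ∀ t ∈ Set.Icc a b, |f t - f s| ≤ Cf * |t - s| ^ lam)
    (hh : ∀ s ∈ Set.Icc a b, ∀ t ∈ Set.Icc a b, |h t - h s| ≤ Ch * |t - s| ^ lam)
    (hg : ∀ s ∈ Set.Icc a b, ∀ t ∈ Set.Icc a b, |g t - g s| ≤ Cg * |t - s| ^ mu)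
    (hφ : ∀ y ∈ Set.Icc a b, IsRSIntegral f g a y (φ y)) :
    (∃ Cφ : ℝ, ∀ s ∈ Set.Icc a b, ∀ t ∈ Set.Icc a b, |φ t - φ s| ≤ Cφ * |t - s| ^ mu) ∧
    ∃ I : ℝ, IsRSIntegral (fun x => h x * f x) g a b I ∧ IsRSIntegral h φ a b I := by
  obtain ⟨hlam0, hlam1⟩ := hlam
  obtain ⟨hmu0, hmu1⟩ := hmu
  set Cf' := max Cf 0 with hCf'
  set Ch' := max Ch 0 with hCh'
  set Cg' := max Cg 0 with hCg'
  have hCf'0 : 0 ≤ Cf' := le_max_right _ _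
  have hCh'0 : 0 ≤ Ch' := le_max_right _ _
  have hCg'0 : 0 ≤ Cg' := le_max_right _ _
  have hf' : ∀ s ∈ Set.Icc a b, ∀ t ∈ Set.Icc a b, |f t - f s| ≤ Cf' * |t - s| ^ lam :=
    fun s hs t ht => (hf s hs t ht).trans
      (mul_le_mul_of_nonneg_right (le_max_left _ _) (by positivity))
  have hh' : ∀ s ∈ Set.Icc a b, ∀ t ∈ Set.Icc a b, |h t - h s| ≤ Ch' * |t - s| ^ lam :=
    fun s hs t ht => (hh s hs t ht).trans
      (mul_le_mul_of_nonneg_right (le_max_left _ _) (by positivity))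
  have hg' : ∀ s ∈ Set.Icc a b, ∀ t ∈ Set.Icc a b, |g t - g s| ≤ Cg' * |t - s| ^ mu :=
    fun s hs t ht => (hg s hs t ht).trans
      (mul_le_mul_of_nonneg_right (le_max_left _ _) (by positivity))
  have ha : a ∈ Set.Icc a b := Set.left_mem_Icc.mpr hab
  have hbb : b ∈ Set.Icc a b := Set.right_mem_Icc.mpr hab
  -- sup bounds
  set Mf := |f a| + Cf' * (b - a) ^ lam with hMfdef
  set Mh := |h a| + Ch' * (b - a) ^ lam with hMhdef
  have habs : ∀ x ∈ Set.Icc a b, |x - a| ^ lam ≤ (b - a) ^ lam := by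
    intro x hx
    refine Real.rpow_le_rpow (abs_nonneg _) ?_ hlam0.le
    rw [abs_of_nonneg (by linarith [hx.1])]
    linarith [hx.2]
  have hMf : ∀ x ∈ Set.Icc a b, |f x| ≤ Mf := by
    intro x hx
    have h1 := (hf' a ha x hx).trans (mul_le_mul_of_nonneg_left (habs x hx) hCf'0)
    calc |f x| = |f a + (f x - f a)| := by ring_nf
      _ ≤ |f a| + |f x - f a| := abs_add_le _ _
      _ ≤ Mf := by rw [hMfdef]; linarith
  have hMh : ∀ x ∈ Set.Icc a b, |h x| ≤ Mh := by
    intro x hx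
    have h1 := (hh' a ha x hx).trans (mul_le_mul_of_nonneg_left (habs x hx) hCh'0)
    calc |h x| = |h a + (h x - h a)| := by ring_nf
      _ ≤ |h a| + |h x - h a| := abs_add_le _ _
      _ ≤ Mh := by rw [hMhdef]; linarith
  have hMf0 : 0 ≤ Mf := (abs_nonneg _).trans (hMf a ha)
  have hMh0 : 0 ≤ Mh := (abs_nonneg _).trans (hMh a ha)
  set KA := Cf' * Cg' * 2 ^ (lam + mu) * Z (lam + mu) with hKAdef
  have hZ0 := Z_nonneg hsum
  have hKA0 : 0 ≤ KA := by positivity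
  -- Hölder bound for φ
  have part1 : ∀ s ∈ Set.Icc a b, ∀ t ∈ Set.Icc a b, s ≤ t →
      |φ t - φ s| ≤ (Mf * Cg' + KA * (b - a) ^ lam) * |t - s| ^ mu := by
    intro s hs t ht hst
    obtain ⟨B, hB⟩ := exists_isRS hlam0 hmu0 hsum hCf'0 hCg'0 hf' hg' hs ht hst
    have hadd : φ t = φ s + B := isRS_add hs.1 hst (hφ s hs) hB (hφ t ht)
    have hbound := intBound hlam0 hmu0 hsum hCf'0 hCg'0 hf' hg' hs ht hst hB
    have hfs : |f s * (g t - g s)| ≤ Mf * (Cg' * |t - s| ^ mu) := by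
      rw [abs_mul]
      exact mul_le_mul (hMf s hs) (hg' s hs t ht) (abs_nonneg _) hMf0
    have hts0 : 0 ≤ t - s := sub_nonneg.mpr hst
    have habs2 : |t - s| = t - s := abs_of_nonneg hts0
    have hsplit : (t - s) ^ (lam + mu) ≤ (b - a) ^ lam * (t - s) ^ mu := by
      rw [Real.rpow_add_of_nonneg hts0 hlam0.le hmu0.le]
      refine mul_le_mul_of_nonneg_right ?_ (by positivity)
      refine Real.rpow_le_rpow hts0 ?_ hlam0.le
      linarith [hs.1, ht.2]
    have e1 : φ t - φ s = B := by rw [hadd]; ring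
    rw [e1, habs2]
    calc |B| ≤ |B - f s * (g t - g s)| + |f s * (g t - g s)| := by
          have := abs_add_le (B - f s * (g t - g s)) (f s * (g t - g s))
          simpa using this
      _ ≤ KA * (t - s) ^ (lam + mu) + Mf * (Cg' * (t - s) ^ mu) := by
          rw [habs2] at hfs
          exact add_le_add hbound hfs
      _ ≤ KA * ((b - a) ^ lam * (t - s) ^ mu) + Mf * (Cg' * (t - s) ^ mu) :=
          add_le_add (mul_le_mul_of_nonneg_left hsplit hKA0) le_rfl
      _ = (Mf * Cg' + KA * (b - a) ^ lam) * (t - s) ^ mu := by ring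
  refine ⟨⟨Mf * Cg' + KA * (b - a) ^ lam, fun s hs t ht => ?_⟩, ?_⟩
  · rcases le_total s t with hst | hst
    · exact part1 s hs t ht hst
    · rw [abs_sub_comm (φ t) (φ s), abs_sub_comm t s]
      exact part1 t ht s hs hst
  -- the product integral
  · set F2 : ℝ → ℝ := fun x => h x * f x with hF2def
    set CF2 := Mh * Cf' + Mf * Ch' with hCF2def
    have hCF20 : 0 ≤ CF2 := by positivity
    have hF2 : ∀ s ∈ Set.Icc a b, ∀ t ∈ Set.Icc a b, |F2 t - F2 s| ≤ CF2 * |t - s| ^ lam := by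
      intro s hs t ht
      have e1 : F2 t - F2 s = h t * (f t - f s) + f s * (h t - h s) := by
        rw [hF2def]; ring
      calc |F2 t - F2 s| ≤ |h t| * |f t - f s| + |f s| * |h t - h s| := by
            rw [e1]
            refine (abs_add_le _ _).trans ?_
            rw [abs_mul, abs_mul]
        _ ≤ Mh * (Cf' * |t - s| ^ lam) + Mf * (Ch' * |t - s| ^ lam) := by
            refine add_le_add
              (mul_le_mul (hMh t ht) (hf' s hs t ht) (abs_nonneg _) hMh0)
              (mul_le_mul (hMf s hs) (hh' s hs t ht) (abs_nonneg _) hMf0)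
        _ = CF2 * |t - s| ^ lam := by rw [hCF2def]; ring
    obtain ⟨I, hI⟩ := exists_isRS hlam0 hmu0 hsum hCF20 hCg'0 hF2 hg' ha hbb hab
    refine ⟨I, hI, ?_⟩
    refine isRS_def.mpr fun ε hε => ?_
    obtain ⟨δ₁, hδ₁, hIε⟩ := isRS_def.mp hI (ε / 2) (by linarith)
    -- choose δ₂
    have htend : Tendsto (fun N : ℕ => Mh * KA * (b - a + 1) *
        ((b - a + 1) / ((N : ℝ) + 1)) ^ (lam + mu - 1)) atTop (𝓝 0) := by
      have := (tendsto_mesh (show (0:ℝ) ≤ b - a + 1 by linarith)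
        (show (0:ℝ) < lam + mu - 1 by linarith)).const_mul (Mh * KA * (b - a + 1))
      simpa using this
    obtain ⟨N₀, hN₀⟩ := (htend.eventually (gt_mem_nhds (show 0 < ε/2 by linarith))).exists
    set δ₂ := (b - a + 1) / ((N₀ : ℝ) + 1) with hδ₂def
    have hδ₂ : 0 < δ₂ := by
      rw [hδ₂def]
      exact div_pos (by linarith) (by positivity)
    refine ⟨min δ₁ δ₂, lt_min hδ₁ hδ₂, fun n p hp hm => ?_⟩
    -- interval integrals
    have hmem : ∀ k ≤ n, p k ∈ Set.Icc a b := fun k hk => hp.mem hk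
    have hBk : ∀ k : ℕ, k < n → ∃ Bk, IsRSIntegral f g (p k) (p (k + 1)) Bk :=
      fun k hk => exists_isRS hlam0 hmu0 hsum hCf'0 hCg'0 hf' hg'
        (hmem k hk.le) (hmem (k + 1) hk) (hp.mono k hk)
    choose B hB using hBk
    have hφdiff : ∀ (k : ℕ) (hk : k < n), φ (p (k + 1)) - φ (p k) = B k hk := by
      intro k hk
      have := isRS_add (hmem k hk.le).1 (hp.mono k hk)
        (hφ (p k) (hmem k hk.le)) (hB k hk) (hφ (p (k + 1)) (hmem (k + 1) hk))
      rw [this]; ring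
    have hBbound : ∀ (k : ℕ) (hk : k < n),
        |B k hk - f (p k) * (g (p (k + 1)) - g (p k))| ≤
          KA * (p (k + 1) - p k) ^ (lam + mu) := by
      intro k hk
      have := intBound hlam0 hmu0 hsum hCf'0 hCg'0 hf' hg'
        (hmem k hk.le) (hmem (k + 1) hk) (hp.mono k hk) (hB k hk)
      exact this
    -- sum manipulation
    have hdiff : RS h φ p n - RS F2 g p n = ∑ k ∈ Finset.range n,
        h (p k) * ((φ (p (k + 1)) - φ (p k)) - f (p k) * (g (p (k + 1)) - g (p k))) := by
      rw [RS, RS, ← Finset.sum_sub_distrib]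
      refine Finset.sum_congr rfl fun k _ => ?_
      rw [hF2def]; ring
    have herr : |RS h φ p n - RS F2 g p n| ≤ Mh * KA * (δ₂ ^ (lam + mu - 1) * (b - a)) := by
      rw [hdiff]
      refine (Finset.abs_sum_le_sum_abs _ _).trans ?_
      have hterm : ∀ k ∈ Finset.range n,
          |h (p k) * ((φ (p (k + 1)) - φ (p k)) - f (p k) * (g (p (k + 1)) - g (p k)))| ≤
            Mh * (KA * (p (k + 1) - p k) ^ (lam + mu)) := by
        intro k hk
        rw [Finset.mem_range] at hk
        rw [abs_mul, hφdiff k hk]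
        exact mul_le_mul (hMh (p k) (hmem k hk.le)) (hBbound k hk) (abs_nonneg _) hMh0
      refine (Finset.sum_le_sum hterm).trans ?_
      have hsumle := sum_gap_pow_le hsum hp hδ₂.le
        (fun k hk => ((hm k hk).trans_le (min_le_right _ _)).le)
      calc ∑ k ∈ Finset.range n, Mh * (KA * (p (k + 1) - p k) ^ (lam + mu))
          = Mh * KA * ∑ k ∈ Finset.range n, (p (k + 1) - p k) ^ (lam + mu) := by
            rw [Finset.mul_sum]
            exact Finset.sum_congr rfl fun k _ => by ring
        _ ≤ Mh * KA * (δ₂ ^ (lam + mu - 1) * (b - a)) :=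
            mul_le_mul_of_nonneg_left hsumle (mul_nonneg hMh0 hKA0)
    have hmain := hIε n p hp (fun k hk => (hm k hk).trans_le (min_le_left _ _))
    have hsmall : Mh * KA * (δ₂ ^ (lam + mu - 1) * (b - a)) < ε / 2 := by
      have h1 : Mh * KA * (δ₂ ^ (lam + mu - 1) * (b - a)) ≤
          Mh * KA * (b - a + 1) * δ₂ ^ (lam + mu - 1) := by
        have h2 : 0 ≤ δ₂ ^ (lam + mu - 1) := Real.rpow_nonneg hδ₂.le _
        have h3 : 0 ≤ Mh * KA * δ₂ ^ (lam + mu - 1) :=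
          mul_nonneg (mul_nonneg hMh0 hKA0) h2
        have h4 := mul_le_mul_of_nonneg_left (show b - a ≤ b - a + 1 by linarith) h3
        calc Mh * KA * (δ₂ ^ (lam + mu - 1) * (b - a))
            = Mh * KA * δ₂ ^ (lam + mu - 1) * (b - a) := by ring
          _ ≤ Mh * KA * δ₂ ^ (lam + mu - 1) * (b - a + 1) := h4
          _ = Mh * KA * (b - a + 1) * δ₂ ^ (lam + mu - 1) := by ring
      exact h1.trans_lt hN₀
    clear_value F2 δ₂ Mh KA
    calc |RS h φ p n - I| ≤ |RS h φ p n - RS F2 g p n| + |RS F2 g p n - I| :=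
          abs_sub_le _ _ _
      _ < ε := by linarith
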